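/- arXiv:1810.06390 — 2 statements merged into one kernel-verified Lean document; each statement's English description precedes it below -/
import Mathlib

section
/- Let B ⊆ ℂⁿ (identified with ℝ^{2n}) be measurable with 0 < m(B) < ∞, and let B₀ ⊆ B be measurable with m(B₀) > 0. Then for every ε > 0 there exists w ∈ ℂⁿ such that m(B) < m(B ∪ (w + B₀)) < m(B) + ε. -/
open MeasureTheory Set Filter Topology
open scoped ENNReal symmDiff

/-- Amrein–Berthier translation lemma: if `B ⊆ ℂⁿ ≅ ℝ^{2n}` is measurable with
`0 < m(B) < ∞` and `B₀ ⊆ B` has positive measure, then for every `ε > 0` there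
is a translate `w + B₀` with `m(B) < m(B ∪ (w + B₀)) < m(B) + ε`. -/
theorem amrein_berthier_translation (n : ℕ) (hn : 0 < n)
    (B B₀ : Set (Fin n → ℂ)) (hB : MeasurableSet B) (hB₀ : MeasurableSet B₀)
    (hB₀B : B₀ ⊆ B) (h0 : 0 < volume B) (hfin : volume B < ⊤) (h00 : 0 < volume B₀)
    (ε : ℝ) (hε : 0 < ε) :
    ∃ w : Fin n → ℂ,
      volume B < volume (B ∪ {z | z - w ∈ B₀}) ∧
      volume (B ∪ {z | z - w ∈ B₀}) < volume B + ENNReal.ofReal ε := by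
  classical
  have hB₀fin : volume B₀ ≠ ∞ := ((measure_mono hB₀B).trans_lt hfin).ne
  set T : (Fin n → ℂ) → Set (Fin n → ℂ) := fun w => (fun z => z - w) ⁻¹' B₀ with hT
  have mp : ∀ w : (Fin n → ℂ), MeasurePreserving (fun z : (Fin n → ℂ) => z - w) volume volume :=
    fun w => measurePreserving_sub_right volume w
  have hTmeas : ∀ w, MeasurableSet (T w) := fun w => hB₀.preimage (mp w).measurable
  have hTvol : ∀ w, volume (T w) = volume B₀ := fun w =>
    (mp w).measure_preimage hB₀.nullMeasurableSet
  set G : (Fin n → ℂ) → ℝ≥0∞ := fun w => volume (T w ∩ B) with hGdef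
  set F : (Fin n → ℂ) → ℝ≥0∞ := fun w => volume (T w \ B) with hFdef
  have hGle : ∀ w, G w ≤ volume B₀ := fun w =>
    (measure_mono inter_subset_left).trans (hTvol w).le
  have hGfin : ∀ w, G w ≠ ∞ := fun w => ((hGle w).trans_lt hB₀fin.lt_top).ne
  have hFeq : ∀ w, F w = volume B₀ - G w := by
    intro w
    have h1 : T w \ B = T w \ (T w ∩ B) := by rw [diff_self_inter]
    rw [hFdef]; simp only
    rw [h1, measure_diff inter_subset_left ((hTmeas w).inter hB).nullMeasurableSet (hGfin w),
      hTvol w]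
  have hunion : ∀ w, volume (B ∪ T w) = volume B + F w := by
    intro w
    rw [← union_diff_self, measure_union disjoint_sdiff_right ((hTmeas w).diff hB)]
  -- Step A : some translate sticks out of `B`
  have stepA : ∃ w₁ : (Fin n → ℂ), G w₁ < volume B₀ := by
    by_contra h
    push_neg at h
    have key : ∫⁻ w : (Fin n → ℂ), G w ∂volume = volume B₀ * volume B := by
      have hpt : ∀ w : (Fin n → ℂ), G w = ∫⁻ z : (Fin n → ℂ),
          (B₀.indicator (1 : (Fin n → ℂ) → ℝ≥0∞) (z - w)) *
            (B.indicator (1 : (Fin n → ℂ) → ℝ≥0∞) z) ∂volume := by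
        intro w
        have : (fun z : (Fin n → ℂ) => (B₀.indicator (1 : (Fin n → ℂ) → ℝ≥0∞) (z - w)) *
            (B.indicator (1 : (Fin n → ℂ) → ℝ≥0∞) z))
            = (T w ∩ B).indicator (1 : (Fin n → ℂ) → ℝ≥0∞) := by
          funext z
          by_cases h1 : z - w ∈ B₀ <;> by_cases h2 : z ∈ B <;>
            simp [Set.indicator_apply, h1, h2, hT, Set.mem_preimage]
        rw [this, lintegral_indicator_one ((hTmeas w).inter hB)]
      have hmeasf : Measurable fun p : (Fin n → ℂ) × (Fin n → ℂ) =>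
          (B₀.indicator (1 : (Fin n → ℂ) → ℝ≥0∞) (p.2 - p.1)) *
            (B.indicator (1 : (Fin n → ℂ) → ℝ≥0∞) p.2) :=
        ((measurable_one.indicator hB₀).comp (measurable_snd.sub measurable_fst)).mul
          ((measurable_one.indicator hB).comp measurable_snd)
      calc ∫⁻ w : (Fin n → ℂ), G w ∂volume
          = ∫⁻ w : (Fin n → ℂ), ∫⁻ z : (Fin n → ℂ), (B₀.indicator (1 : (Fin n → ℂ) → ℝ≥0∞) (z - w)) *
              (B.indicator (1 : (Fin n → ℂ) → ℝ≥0∞) z) ∂volume ∂volume := by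
            simp only [hpt]
        _ = ∫⁻ z : (Fin n → ℂ), ∫⁻ w : (Fin n → ℂ), (B₀.indicator (1 : (Fin n → ℂ) → ℝ≥0∞) (z - w)) *
              (B.indicator (1 : (Fin n → ℂ) → ℝ≥0∞) z) ∂volume ∂volume :=
            lintegral_lintegral_swap hmeasf.aemeasurable
        _ = ∫⁻ z : (Fin n → ℂ), (∫⁻ w : (Fin n → ℂ), B₀.indicator (1 : (Fin n → ℂ) → ℝ≥0∞) (z - w) ∂volume) *
              (B.indicator (1 : (Fin n → ℂ) → ℝ≥0∞) z) ∂volume := by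
            congr 1; funext z
            exact lintegral_mul_const _
              ((measurable_one.indicator hB₀).comp (measurable_const.sub measurable_id))
        _ = ∫⁻ z : (Fin n → ℂ), volume B₀ * B.indicator (1 : (Fin n → ℂ) → ℝ≥0∞) z ∂volume := by
            congr 1; funext z
            have hmp : MeasurePreserving (fun w : (Fin n → ℂ) => z - w) volume volume := by
              simpa [Function.comp_def, sub_eq_neg_add] using
                (measurePreserving_add_right (volume : Measure (Fin n → ℂ)) z).comp
                  (Measure.measurePreserving_neg (volume : Measure (Fin n → ℂ)))
            rw [hmp.lintegral_comp (measurable_one.indicator hB₀),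
              lintegral_indicator_one hB₀]
        _ = volume B₀ * volume B := by
            rw [lintegral_const_mul _ (measurable_one.indicator hB),
              lintegral_indicator_one hB]
    have hlb : (∞ : ℝ≥0∞) ≤ ∫⁻ w : (Fin n → ℂ), G w ∂volume := by
      calc (∞ : ℝ≥0∞) = volume B₀ * volume (univ : Set (Fin n → ℂ)) := by
            have : Nontrivial (Fin n → ℂ) := by
              have : NeZero n := ⟨hn.ne'⟩
              infer_instance
            rw [measure_univ_of_isAddLeftInvariant (volume : Measure (Fin n → ℂ)),
              ENNReal.mul_top h00.ne']
        _ = ∫⁻ _ : (Fin n → ℂ), volume B₀ ∂volume := (lintegral_const _).symm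
        _ ≤ ∫⁻ w : (Fin n → ℂ), G w ∂volume := lintegral_mono h
    rw [key] at hlb
    exact (ENNReal.mul_ne_top hB₀fin hfin.ne) (top_le_iff.mp hlb)
  obtain ⟨w₁, hw₁⟩ := stepA
  -- Step B : continuity of `w ↦ (G w).toReal`
  have cont : Continuous fun w : (Fin n → ℂ) => (G w).toReal := by
    rw [continuous_iff_continuousAt]
    intro w₀
    set Φ : C((Fin n → ℂ) × (Fin n → ℂ), Fin n → ℂ) := ⟨fun p => p.2 - p.1, by fun_prop⟩ with hΦ
    have hcoe : ∀ w : (Fin n → ℂ), ⇑(Φ.curry w) = fun z : (Fin n → ℂ) => z - w := fun w => rfl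
    have hd : Tendsto (fun w : (Fin n → ℂ) => volume ((T w) ∆ (T w₀))) (𝓝 w₀) (𝓝 0) := by
      have := tendsto_measure_symmDiff_preimage_nhds_zero
        (μ := (volume : Measure (Fin n → ℂ))) (ν := (volume : Measure (Fin n → ℂ)))
        (f := fun w : (Fin n → ℂ) => Φ.curry w) (g := Φ.curry w₀) (s := B₀)
        (Φ.curry.continuous.tendsto w₀)
        (Eventually.of_forall fun w => by rw [hcoe w]; exact mp w)
        (by rw [hcoe w₀]; exact mp w₀) hB₀.nullMeasurableSet hB₀fin
      simpa only [hcoe] using this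
    have hdfin : ∀ w : (Fin n → ℂ), volume ((T w) ∆ (T w₀)) ≠ ∞ := by
      intro w
      have hle : volume ((T w) ∆ (T w₀)) ≤ volume B₀ + volume B₀ := by
        calc volume ((T w) ∆ (T w₀)) ≤ volume (T w ∪ T w₀) :=
              measure_mono symmDiff_subset_union
          _ ≤ volume (T w) + volume (T w₀) := measure_union_le _ _
          _ = volume B₀ + volume B₀ := by rw [hTvol, hTvol]
      exact (hle.trans_lt (ENNReal.add_lt_top.mpr ⟨hB₀fin.lt_top, hB₀fin.lt_top⟩)).ne
    have hbound : ∀ w : (Fin n → ℂ), dist ((G w).toReal) ((G w₀).toReal)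
        ≤ (volume ((T w) ∆ (T w₀))).toReal := by
      intro w
      have h1 : G w ≤ G w₀ + volume ((T w) ∆ (T w₀)) := by
        refine (measure_mono ?_).trans (measure_union_le _ _)
        intro z hz
        by_cases hz0 : z ∈ T w₀
        · exact Or.inl ⟨hz0, hz.2⟩
        · exact Or.inr (Set.mem_symmDiff.mpr (Or.inl ⟨hz.1, hz0⟩))
      have h2 : G w₀ ≤ G w + volume ((T w) ∆ (T w₀)) := by
        refine (measure_mono ?_).trans (measure_union_le _ _)
        intro z hz
        by_cases hz0 : z ∈ T w
        · exact Or.inl ⟨hz0, hz.2⟩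
        · exact Or.inr (Set.mem_symmDiff.mpr (Or.inr ⟨hz.1, hz0⟩))
      have h1' : (G w).toReal ≤ (G w₀).toReal + (volume ((T w) ∆ (T w₀))).toReal := by
        have := ENNReal.toReal_mono (ENNReal.add_ne_top.mpr ⟨hGfin w₀, hdfin w⟩) h1
        rwa [ENNReal.toReal_add (hGfin w₀) (hdfin w)] at this
      have h2' : (G w₀).toReal ≤ (G w).toReal + (volume ((T w) ∆ (T w₀))).toReal := by
        have := ENNReal.toReal_mono (ENNReal.add_ne_top.mpr ⟨hGfin w, hdfin w⟩) h2
        rwa [ENNReal.toReal_add (hGfin w) (hdfin w)] at this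
      rw [Real.dist_eq, abs_sub_le_iff]
      constructor <;> linarith
    have hd' : Tendsto (fun w : (Fin n → ℂ) => (volume ((T w) ∆ (T w₀))).toReal) (𝓝 w₀) (𝓝 0) := by
      have := (ENNReal.tendsto_toReal (by simp : (0 : ℝ≥0∞) ≠ ∞)).comp hd
      simpa [Function.comp_def] using this
    exact tendsto_iff_dist_tendsto_zero.mpr
      (squeeze_zero (fun w => dist_nonneg) hbound hd')
  -- Step C : intermediate value theorem
  set a : ℝ := (volume B₀).toReal with ha
  have ha0 : 0 < a := ENNReal.toReal_pos h00.ne' hB₀fin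
  have hG0 : (G 0).toReal = a := by
    have hT0 : T 0 = B₀ := by ext z; simp [hT]
    rw [hGdef]; simp only
    rw [hT0, inter_eq_self_of_subset_left hB₀B]
  have hGw₁ : (G w₁).toReal < a :=
    (ENNReal.toReal_lt_toReal (hGfin w₁) hB₀fin).mpr hw₁
  set δ : ℝ := a - (G w₁).toReal with hδdef
  have hδ : 0 < δ := by simp [hδdef]; linarith
  set c : ℝ := min ε δ / 2 with hcdef
  have hc0 : 0 < c := by positivity
  have hcε : c < ε := by
    have : min ε δ ≤ ε := min_le_left _ _
    simp only [hcdef]; linarith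
  have hcδ : c < δ := by
    have : min ε δ ≤ δ := min_le_right _ _
    simp only [hcdef]; linarith
  set ψ : ℝ → ℝ := fun t => (G (t • w₁)).toReal with hψ
  have ψcont : Continuous ψ := cont.comp (continuous_id.smul continuous_const)
  have hmem : a - c ∈ Icc (ψ 1) (ψ 0) := by
    constructor
    · simp only [hψ, one_smul]; linarith
    · simp only [hψ, zero_smul, hG0]; linarith
  obtain ⟨t, -, htval⟩ := intermediate_value_Icc' zero_le_one ψcont.continuousOn hmem
  have htval' : (G (t • w₁)).toReal = a - c := htval
  refine ⟨t • w₁, ?_, ?_⟩ <;>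
    rw [show {z : (Fin n → ℂ) | z - t • w₁ ∈ B₀} = T (t • w₁) from rfl, hunion]
  · have hFt : (F (t • w₁)).toReal = c := by
      rw [hFeq, ENNReal.toReal_sub_of_le (hGle _) hB₀fin, ← ha, htval']
      ring
    have hF0 : F (t • w₁) ≠ 0 := by
      intro h
      rw [h] at hFt
      simp at hFt
      linarith
    exact ENNReal.lt_add_right hfin.ne hF0
  · have hFfin : F (t • w₁) ≠ ∞ := by
      rw [hFeq]
      exact (tsub_le_self.trans_lt hB₀fin.lt_top).ne
    have hFt : (F (t • w₁)).toReal = c := by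
      rw [hFeq, ENNReal.toReal_sub_of_le (hGle _) hB₀fin, ← ha, htval']
      ring
    refine ENNReal.add_lt_add_left hfin.ne ?_
    rw [ENNReal.lt_ofReal_iff_toReal_lt hFfin, hFt]
    exact hcε
end

section
/- Let E and F be orthogonal projections on a Hilbert space H, and let E ∩ F denote the orthogonal projection onto Range(E) ∩ Range(F). If EF is Hilbert–Schmidt, then Range(E) ∩ Range(F) is finite-dimensional with dim(Range(E) ∩ Range(F)) = ‖E ∩ F‖²_{HS} ≤ ‖EF‖²_{HS}. -/
open ENNReal

open NNReal

section aux
local notation "⟪" x ", " y "⟫" => @inner ℂ _ _ x y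

variable {H : Type*} [NormedAddCommGroup H] [InnerProductSpace ℂ H] [CompleteSpace H]

omit [CompleteSpace H] in
lemma parseval' {ι : Type*} (b : HilbertBasis ι ℂ H) (x : H) :
    ∑' i, (‖b.repr x i‖₊ : ℝ≥0∞)^2 = (‖x‖₊:ℝ≥0∞)^2 := by
  have h := lp.hasSum_norm (p := 2) (by norm_num) (b.repr x)
  have ht : (2 : ℝ≥0∞).toReal = ((2:ℕ):ℝ) := by norm_num
  rw [ht] at h
  simp only [Real.rpow_natCast] at h
  have h2 : HasSum (fun i => ((‖b.repr x i‖₊^2 : ℝ≥0) : ℝ)) ((‖x‖₊^2 : ℝ≥0) : ℝ) := by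
    convert h using 2
    · push_cast
      ring
    · rw [b.repr.norm_map x]
      push_cast
      ring
  have h3 := NNReal.hasSum_coe.mp h2
  have h4 := ENNReal.tsum_coe_eq h3
  rw [← ENNReal.coe_pow, ← h4]
  exact tsum_congr (fun i => by push_cast; ring)

lemma tsum_adjoint_sq' {ι : Type*} (b : HilbertBasis ι ℂ H) (T : H →L[ℂ] H) :
    ∑' i, (‖T (b i)‖₊ : ℝ≥0∞)^2
      = ∑' j, (‖(ContinuousLinearMap.adjoint T) (b j)‖₊ : ℝ≥0∞)^2 := by
  calc ∑' i, (‖T (b i)‖₊:ℝ≥0∞)^2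
      = ∑' i, ∑' j, (‖b.repr (T (b i)) j‖₊:ℝ≥0∞)^2 :=
        tsum_congr fun i => (parseval' b _).symm
    _ = ∑' j, ∑' i, (‖b.repr ((ContinuousLinearMap.adjoint T) (b j)) i‖₊:ℝ≥0∞)^2 := by
        rw [ENNReal.tsum_comm]
        refine tsum_congr fun j => tsum_congr fun i => ?_
        have h1 : b.repr (T (b i)) j = ⟪b j, T (b i)⟫ := b.repr_apply_apply _ _
        have h2 : b.repr ((ContinuousLinearMap.adjoint T) (b j)) i
            = ⟪T (b i), b j⟫ := by
          rw [b.repr_apply_apply]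
          exact ContinuousLinearMap.adjoint_inner_right T (b i) (b j)
        have h3 : ‖b.repr (T (b i)) j‖₊
            = ‖b.repr ((ContinuousLinearMap.adjoint T) (b j)) i‖₊ := by
          apply NNReal.coe_injective
          simp only [coe_nnnorm, h1, h2]
          exact norm_inner_symm _ _
        rw [h3]
    _ = ∑' j, (‖(ContinuousLinearMap.adjoint T) (b j)‖₊:ℝ≥0∞)^2 :=
        tsum_congr fun j => parseval' b _

omit [CompleteSpace H] in
lemma fix_of_idem' (T : H →L[ℂ] H) (hT : T.comp T = T) {y : H}
    (hy : y ∈ LinearMap.range (T : H →ₗ[ℂ] H)) : T y = y := by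
  obtain ⟨z, rfl⟩ := hy
  have := DFunLike.congr_fun hT z
  simpa using this

lemma idem_sa_nnnorm_le (G : H →L[ℂ] H) (hG : G.comp G = G)
    (hG' : IsSelfAdjoint G) (x : H) : ‖G x‖₊ ≤ ‖x‖₊ := by
  have key : ⟪G x, G x⟫ = ⟪x, G x⟫ := by
    calc ⟪G x, G x⟫ = ⟪(ContinuousLinearMap.adjoint G) x, G x⟫ := by
          rw [hG'.adjoint_eq]
      _ = ⟪x, G (G x)⟫ := ContinuousLinearMap.adjoint_inner_left G (G x) x
      _ = ⟪x, G x⟫ := by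
          rw [show G (G x) = G x from by simpa using DFunLike.congr_fun hG x]
  have h2 : ‖G x‖ * ‖G x‖ ≤ ‖x‖ * ‖G x‖ := by
    have hs : (‖⟪G x, G x⟫‖ : ℝ) = ‖G x‖ * ‖G x‖ := by
      rw [@inner_self_eq_norm_sq_to_K ℂ]
      rw [norm_pow]
      simp [sq]
    calc ‖G x‖ * ‖G x‖ = ‖⟪G x, G x⟫‖ := hs.symm
      _ = ‖⟪x, G x⟫‖ := by rw [key]
      _ ≤ ‖x‖ * ‖G x‖ := norm_inner_le_norm x (G x)
  have h3 : ‖G x‖ ≤ ‖x‖ := by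
    by_cases h0 : ‖G x‖ = 0
    · rw [h0]; exact norm_nonneg x
    · have hpos : 0 < ‖G x‖ := lt_of_le_of_ne (norm_nonneg _) (Ne.symm h0)
      exact le_of_mul_le_mul_right h2 hpos
  exact NNReal.coe_le_coe.mp (by simpa using h3)
end aux

/-- if `E, F` are orthogonal projections on a Hilbert space `H`
and `E ∩ F` (here `G`) denotes the orthogonal projection onto
`Range(E) ∩ Range(F)`, and `EF` is Hilbert–Schmidt, then `Range(E) ∩ Range(F)`
is finite dimensional and
`dim(Range(E) ∩ Range(F)) = ‖E ∩ F‖²_{HS} ≤ ‖EF‖²_{HS}`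
(Hilbert–Schmidt norms computed via a Hilbert basis `b`). -/
theorem proj_inter_hilbertSchmidt {H : Type*} [NormedAddCommGroup H]
    [InnerProductSpace ℂ H] [CompleteSpace H]
    (E F G : H →L[ℂ] H)
    (hE : E.comp E = E) (hE' : IsSelfAdjoint E)
    (hF : F.comp F = F) (hF' : IsSelfAdjoint F)
    (hG : G.comp G = G) (hG' : IsSelfAdjoint G)
    (hGrange : LinearMap.range (G : H →ₗ[ℂ] H) = LinearMap.range (E : H →ₗ[ℂ] H) ⊓ LinearMap.range (F : H →ₗ[ℂ] H))
    {ι : Type*} (b : HilbertBasis ι ℂ H)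
    (hHS : ∑' i : ι, (‖(E.comp F) (b i)‖₊ : ℝ≥0∞) ^ 2 < ⊤) :
    FiniteDimensional ℂ ↥(LinearMap.range (E : H →ₗ[ℂ] H) ⊓ LinearMap.range (F : H →ₗ[ℂ] H)) ∧
    (Module.finrank ℂ ↥(LinearMap.range (E : H →ₗ[ℂ] H) ⊓ LinearMap.range (F : H →ₗ[ℂ] H)) : ℝ≥0∞) =
      ∑' i : ι, (‖G (b i)‖₊ : ℝ≥0∞) ^ 2 ∧
    ∑' i : ι, (‖G (b i)‖₊ : ℝ≥0∞) ^ 2 ≤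
      ∑' i : ι, (‖(E.comp F) (b i)‖₊ : ℝ≥0∞) ^ 2 := by
  set K : Submodule ℂ H := LinearMap.range (E : H →ₗ[ℂ] H) ⊓ LinearMap.range (F : H →ₗ[ℂ] H) with hK
  -- `E ∘ F ∘ G = G`
  have hEFG : E.comp (F.comp G) = G := by
    ext x
    have hmem : G x ∈ K := hGrange ▸ ⟨x, rfl⟩
    have hmemE : G x ∈ LinearMap.range (E : H →ₗ[ℂ] H) := (Submodule.mem_inf.mp hmem).1
    have hmemF : G x ∈ LinearMap.range (F : H →ₗ[ℂ] H) := (Submodule.mem_inf.mp hmem).2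
    simp only [ContinuousLinearMap.comp_apply]
    rw [fix_of_idem' F hF hmemF, fix_of_idem' E hE hmemE]
  -- `G ∘ F ∘ E = G`
  have hGFE : (G.comp F).comp E = G := by
    have h1 : E * (F * G) = G := by
      simpa only [ContinuousLinearMap.mul_def] using hEFG
    have h2 := congrArg star h1
    rw [star_mul, star_mul, hE'.star_eq, hF'.star_eq, hG'.star_eq] at h2
    simpa only [ContinuousLinearMap.mul_def] using h2
  -- the inequality
  have hle : ∑' i : ι, (‖G (b i)‖₊ : ℝ≥0∞) ^ 2 ≤
      ∑' i : ι, (‖(E.comp F) (b i)‖₊ : ℝ≥0∞) ^ 2 := by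
    have hpt : ∀ i, (‖G (b i)‖₊ : ℝ≥0∞) ^ 2 ≤ (‖(F.comp E) (b i)‖₊ : ℝ≥0∞) ^ 2 := by
      intro i
      have h1 : G (b i) = G ((F.comp E) (b i)) := by
        conv_lhs => rw [← hGFE]
        simp [ContinuousLinearMap.comp_apply]
      rw [h1]
      have h2 : ‖G ((F.comp E) (b i))‖₊ ≤ ‖(F.comp E) (b i)‖₊ :=
        idem_sa_nnnorm_le G hG hG' _
      exact pow_le_pow_left₀ zero_le (ENNReal.coe_le_coe.mpr h2) 2
    have hadj : ContinuousLinearMap.adjoint (F.comp E) = E.comp F := by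
      rw [ContinuousLinearMap.adjoint_comp, hE'.adjoint_eq, hF'.adjoint_eq]
    calc ∑' i : ι, (‖G (b i)‖₊ : ℝ≥0∞) ^ 2
        ≤ ∑' i : ι, (‖(F.comp E) (b i)‖₊ : ℝ≥0∞) ^ 2 := ENNReal.tsum_le_tsum hpt
      _ = ∑' i : ι, (‖(ContinuousLinearMap.adjoint (F.comp E)) (b i)‖₊ : ℝ≥0∞) ^ 2 :=
          tsum_adjoint_sq' b _
      _ = ∑' i : ι, (‖(E.comp F) (b i)‖₊ : ℝ≥0∞) ^ 2 := by rw [hadj]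
  -- K is closed, hence complete
  have hKclosed : IsClosed (K : Set H) := by
    have hset : (K : Set H) = {x : H | G x = x} := by
      ext x
      constructor
      · intro hx
        exact fix_of_idem' G hG (hGrange ▸ hx)
      · intro hx
        have : x ∈ LinearMap.range (G : H →ₗ[ℂ] H) := ⟨x, hx⟩
        rwa [hGrange] at this
    rw [hset]
    exact isClosed_eq G.continuous continuous_id
  haveI : CompleteSpace K := hKclosed.completeSpace_coe
  obtain ⟨w, c, -⟩ := exists_hilbertBasis ℂ K
  have hGmem : ∀ i, G (b i) ∈ K := fun i => hGrange ▸ ⟨b i, rfl⟩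
  have hGfixK : ∀ y : K, G (y : H) = (y : H) := fun y =>
    fix_of_idem' G hG (hGrange.symm ▸ y.2)
  -- key computation
  have hkey : ∀ i, (‖G (b i)‖₊ : ℝ≥0∞) ^ 2
      = ∑' j : w, (‖(inner ℂ ((c j : K) : H) (b i) : ℂ)‖₊ : ℝ≥0∞) ^ 2 := by
    intro i
    set y : K := ⟨G (b i), hGmem i⟩ with hy
    have h1 : (‖G (b i)‖₊ : ℝ≥0∞) ^ 2 = (‖y‖₊ : ℝ≥0∞) ^ 2 := rfl
    rw [h1, ← parseval' c y]
    refine tsum_congr fun j => ?_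
    congr 2
    have h2 : c.repr y j = (inner ℂ ((c j : K) : H) (G (b i)) : ℂ) := by
      rw [c.repr_apply_apply]
      rfl
    rw [h2]
    have h3 : (inner ℂ ((c j : K) : H) (G (b i)) : ℂ) = (inner ℂ ((c j : K) : H) (b i) : ℂ) :=
      calc (inner ℂ ((c j : K) : H) (G (b i)) : ℂ)
        = (inner ℂ ((ContinuousLinearMap.adjoint G) ((c j : K) : H)) (b i) : ℂ) :=
          (ContinuousLinearMap.adjoint_inner_left G (b i) _).symm
      _ = (inner ℂ (G ((c j : K) : H)) (b i) : ℂ) := by rw [hG'.adjoint_eq]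
      _ = (inner ℂ ((c j : K) : H) (b i) : ℂ) := by rw [hGfixK (c j)]
    rw [h3]
  have hsum : ∑' i : ι, (‖G (b i)‖₊ : ℝ≥0∞) ^ 2 = ∑' _ : w, (1 : ℝ≥0∞) := by
    rw [tsum_congr hkey, ENNReal.tsum_comm]
    refine tsum_congr fun j => ?_
    have hterm : ∀ i, (‖(inner ℂ ((c j : K) : H) (b i) : ℂ)‖₊ : ℝ≥0∞) ^ 2
        = (‖b.repr ((c j : K) : H) i‖₊ : ℝ≥0∞) ^ 2 := by
      intro i
      congr 2
      apply NNReal.coe_injective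
      simp only [coe_nnnorm, b.repr_apply_apply]
      exact norm_inner_symm _ _
    rw [tsum_congr hterm, parseval' b]
    have h1 : ‖((c j : K) : H)‖ = 1 := by
      have h0 : ‖((c j : K) : H)‖ = ‖c j‖ := rfl
      rw [h0]
      exact c.orthonormal.1 j
    have h2 : ‖((c j : K) : H)‖₊ = 1 := NNReal.coe_injective (by simp [h1])
    rw [h2]
    simp
  -- finiteness
  have hlt : ∑' _ : w, (1 : ℝ≥0∞) < ⊤ := hsum ▸ lt_of_le_of_lt hle hHS
  haveI hwfin : Finite w := by
    by_contra hinf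
    rw [not_finite_iff_infinite] at hinf
    rw [ENNReal.tsum_const_eq_top_of_ne_zero one_ne_zero] at hlt
    exact absurd hlt (by simp)
  haveI : Fintype w := Fintype.ofFinite w
  have hfd : FiniteDimensional ℂ K :=
    Module.Finite.of_basis c.toOrthonormalBasis.toBasis
  have hrank : Module.finrank ℂ K = Fintype.card w :=
    Module.finrank_eq_card_basis c.toOrthonormalBasis.toBasis
  have hcard : ∑' _ : w, (1 : ℝ≥0∞) = (Fintype.card w : ℝ≥0∞) := by
    rw [tsum_fintype]
    simp
  refine ⟨hfd, ?_, hle⟩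
  rw [hsum, hcard, hrank]
end
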